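/- arXiv:2110.06559 — 3 statements merged into one kernel-verified Lean document; each statement's English description precedes it below -/
import Mathlib

section
/- The Arete(α, θ, λ) distribution is infinitely divisible: for any n, if X_{1i}, X_{2i} ~ Gamma(α/n, θ) and Y_{1i}, Y_{2i} ~ Gamma(1/n, λ) are 4n independent random variables, then ∑_{i=1}^n (X_{1i} - X_{2i} + Y_{1i} - Y_{2i}) has the Arete(α, θ, λ) distribution. -/
open scoped ENNReal
open MeasureTheory ProbabilityTheory Set Real

open MeasureTheory ProbabilityTheory

-- Step 1: convolution of densities
lemma conv_withDensity (f g : ℝ → ℝ≥0∞) (hf : Measurable f) (hg : Measurable g) :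
    Measure.conv (volume.withDensity f) (volume.withDensity g) =
      volume.withDensity (fun z => ∫⁻ x, f x * g (z - x)) := by
  have hF : Measurable (Function.uncurry fun x z => f x * g (z - x)) := by
    apply Measurable.mul
    · exact hf.comp measurable_fst
    · exact hg.comp (measurable_snd.sub measurable_fst)
  ext s hs
  rw [withDensity_apply _ hs]
  show ((volume.withDensity f).prod (volume.withDensity g)).map
      (fun p : ℝ × ℝ => p.1 + p.2) s = _
  rw [Measure.map_apply measurable_add hs,
    Measure.prod_apply (measurable_add hs)]
  have key : ∀ x : ℝ, (volume.withDensity g)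
      (Prod.mk x ⁻¹' ((fun p : ℝ × ℝ => p.1 + p.2) ⁻¹' s)) = ∫⁻ z in s, g (z - x) := by
    intro x
    have hset : (Prod.mk x ⁻¹' ((fun p : ℝ × ℝ => p.1 + p.2) ⁻¹' s))
        = (fun y => x + y) ⁻¹' s := rfl
    rw [hset, withDensity_apply _ ((measurable_const_add x) hs), ← lintegral_indicator ((measurable_const_add x) hs), ← lintegral_indicator hs]
    · calc ∫⁻ y, ((fun y => x + y) ⁻¹' s).indicator g y
          = ∫⁻ y, s.indicator (fun z => g (z - x)) (x + y) := by
            congr 1; ext y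
            by_cases hy : x + y ∈ s <;>
              simp [Set.indicator_apply, Set.mem_preimage, hy]
        _ = ∫⁻ z, s.indicator (fun z => g (z - x)) z :=
            lintegral_add_left_eq_self _ x
  simp_rw [key]
  have hmeasinner : Measurable fun x => ∫⁻ z in s, g (z - x) := by
    simp_rw [← lintegral_indicator hs]
    have : ∀ x, (fun z => s.indicator (fun z => g (z - x)) z)
        = fun z => {p : ℝ × ℝ | p.2 ∈ s}.indicator (fun p : ℝ × ℝ => g (p.2 - p.1)) (x, z) := by
      intro x; ext z
      by_cases hz : z ∈ s <;> simp [hz, Set.indicator_apply]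
    simp_rw [this]
    exact Measurable.lintegral_prod_right <|
      ((hg.comp (measurable_snd.sub measurable_fst)).indicator (measurable_snd hs))
  rw [lintegral_withDensity_eq_lintegral_mul _ hf hmeasinner]
  simp only [Pi.mul_apply]
  calc ∫⁻ x, f x * ∫⁻ z in s, g (z - x)
      = ∫⁻ x, ∫⁻ z, s.indicator (fun z => f x * g (z - x)) z := by
        congr 1; ext x
        rw [← lintegral_indicator hs, ← lintegral_const_mul (f x) ((show Measurable fun z => g (z - x) from hg.comp (measurable_sub_const x)).indicator hs)]
        congr 1; ext z
        by_cases hz : z ∈ s <;> simp [hz]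
    _ = ∫⁻ z, ∫⁻ x, s.indicator (fun z => f x * g (z - x)) z := by
        apply lintegral_lintegral_swap
        apply Measurable.aemeasurable
        have huncurry : (Function.uncurry fun x z => s.indicator (fun z => f x * g (z - x)) z)
            = (Prod.snd ⁻¹' s).indicator (Function.uncurry fun x z => f x * g (z - x)) := by
          ext p
          by_cases h : p.2 ∈ s <;> simp [Function.uncurry, Set.indicator_apply, h]
        rw [huncurry]
        exact hF.indicator (measurable_snd hs)
    _ = ∫⁻ z in s, ∫⁻ x, f x * g (z - x) := by
        rw [← lintegral_indicator hs]
        congr 1; ext z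
        by_cases hz : z ∈ s <;> simp [hz]


-- scaling of the beta-type integral
lemma lintegral_beta_scale (a b : ℝ) {z : ℝ} (hz : 0 < z) :
    ∫⁻ x in Ioo 0 z, ENNReal.ofReal (x ^ (a-1) * (z - x) ^ (b-1)) =
      ENNReal.ofReal (z ^ (a+b-1)) *
        ∫⁻ t in Ioo (0:ℝ) 1, ENNReal.ofReal (t ^ (a-1) * (1 - t) ^ (b-1)) := by
  have hz' : (z : ℝ) ≠ 0 := hz.ne'
  set ψ : ℝ → ℝ≥0∞ := (Ioo 0 z).indicator (fun x => ENNReal.ofReal (x ^ (a-1) * (z - x) ^ (b-1)))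
    with hψ
  have hψmeas : Measurable ψ :=
    (((measurable_id.pow_const _).mul ((measurable_const.sub measurable_id).pow_const _)).ennreal_ofReal).indicator measurableSet_Ioo
  have hmem : ∀ t : ℝ, z * t ∈ Ioo 0 z ↔ t ∈ Ioo (0:ℝ) 1 := by
    intro t
    constructor
    · rintro ⟨h1, h2⟩
      have ht : 0 < t := by nlinarith
      exact ⟨ht, by nlinarith⟩
    · rintro ⟨h1, h2⟩
      exact ⟨mul_pos hz h1, by nlinarith⟩
  have hpt : ∀ t : ℝ, ψ (z * t) = (Ioo (0:ℝ) 1).indicator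
      (fun t => ENNReal.ofReal (z ^ (a-1) * z ^ (b-1)) *
        ENNReal.ofReal (t ^ (a-1) * (1 - t) ^ (b-1))) t := by
    intro t
    by_cases ht : t ∈ Ioo (0:ℝ) 1
    · rw [hψ, Set.indicator_of_mem ((hmem t).mpr ht), Set.indicator_of_mem ht]
      have h1 : (z * t) ^ (a-1) = z ^ (a-1) * t ^ (a-1) := Real.mul_rpow hz.le ht.1.le
      have h2 : (z - z * t) ^ (b-1) = z ^ (b-1) * (1 - t) ^ (b-1) := by
        rw [show z - z * t = z * (1 - t) by ring]
        exact Real.mul_rpow hz.le (by nlinarith [ht.2])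
      rw [h1, h2, ← ENNReal.ofReal_mul (by positivity)]
      ring_nf
    · rw [hψ, Set.indicator_of_notMem (fun hmem' => ht ((hmem t).mp hmem')),
        Set.indicator_of_notMem ht]
  have key : ∫⁻ t, ψ (z * t) = ENNReal.ofReal |z⁻¹| * ∫⁻ x, ψ x := by
    rw [← lintegral_map hψmeas (measurable_const_mul z), Real.map_volume_mul_left hz',
      lintegral_smul_measure, smul_eq_mul]
  have hinv : ENNReal.ofReal z * ENNReal.ofReal |z⁻¹| = 1 := by
    rw [← ENNReal.ofReal_mul hz.le, abs_of_pos (by positivity), mul_inv_cancel₀ hz']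
    simp
  have main : ∫⁻ x, ψ x = ENNReal.ofReal z * ∫⁻ t, ψ (z * t) := by
    rw [key, ← mul_assoc, hinv, one_mul]
  have hval : ∫⁻ t, ψ (z * t) = ENNReal.ofReal (z ^ (a-1) * z ^ (b-1)) *
      ∫⁻ t in Ioo (0:ℝ) 1, ENNReal.ofReal (t ^ (a-1) * (1 - t) ^ (b-1)) := by
    simp_rw [hpt]
    rw [lintegral_indicator measurableSet_Ioo,
      lintegral_const_mul' _ _ ENNReal.ofReal_ne_top]
  rw [← lintegral_indicator measurableSet_Ioo, ← hψ, main, hval, ← mul_assoc,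
    ← ENNReal.ofReal_mul hz.le]
  congr 2
  rw [show a + b - 1 = 1 + (a-1) + (b-1) by ring, Real.rpow_add hz, Real.rpow_add hz,
    Real.rpow_one]
  ring

lemma measurable_gammaPDF (a r : ℝ) : Measurable (gammaPDF a r) :=
  (measurable_gammaPDFReal a r).ennreal_ofReal

lemma gammaMeasure_conv {a b r : ℝ} (ha : 0 < a) (hb : 0 < b) (hr : 0 < r) :
    Measure.conv (gammaMeasure a r) (gammaMeasure b r) = gammaMeasure (a + b) r := by
  have hca : (0:ℝ) ≤ r ^ a / Gamma a :=
    le_of_lt (div_pos (rpow_pos_of_pos hr a) (Gamma_pos_of_pos ha))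
  have hcb : (0:ℝ) ≤ r ^ b / Gamma b :=
    le_of_lt (div_pos (rpow_pos_of_pos hr b) (Gamma_pos_of_pos hb))
  have hc : (0:ℝ) ≤ r ^ (a+b) / Gamma (a+b) :=
    le_of_lt (div_pos (rpow_pos_of_pos hr _) (Gamma_pos_of_pos (add_pos ha hb)))
  set h : ℝ → ℝ≥0∞ := fun z => ∫⁻ x, gammaPDF a r x * gammaPDF b r (z - x) with hh
  have hconv : Measure.conv (gammaMeasure a r) (gammaMeasure b r) = volume.withDensity h :=
    conv_withDensity _ _ (measurable_gammaPDF a r) (measurable_gammaPDF b r)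
  set B := ∫⁻ t in Ioo (0:ℝ) 1, ENNReal.ofReal (t ^ (a-1) * (1 - t) ^ (b-1)) with hB
  set D := ENNReal.ofReal (r ^ a / Gamma a * (r ^ b / Gamma b)) * B with hD
  -- value for negative z
  have hneg : ∀ z : ℝ, z < 0 → h z = 0 := by
    intro z hz
    have : ∀ x : ℝ, gammaPDF a r x * gammaPDF b r (z - x) = 0 := by
      intro x
      rcases lt_or_ge x 0 with hx | hx
      · rw [gammaPDF_of_neg hx, zero_mul]
      · rw [gammaPDF_of_neg (by linarith : z - x < 0), mul_zero]
    simp_rw [hh, this, lintegral_zero]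
  -- value for positive z
  have hpos : ∀ z : ℝ, 0 < z →
      h z = D * ENNReal.ofReal (z ^ (a+b-1) * Real.exp (-(r*z))) := by
    intro z hz
    set F : ℝ → ℝ≥0∞ := fun x => gammaPDF a r x * gammaPDF b r (z - x) with hF
    have hnull : volume ({0, z} : Set ℝ) = 0 := by
      rw [show ({0, z} : Set ℝ) = {0} ∪ {z} from rfl]
      exact measure_union_null (measure_singleton 0) (measure_singleton z)
    have hsub : {x : ℝ | ¬ F x = (Ioo 0 z).indicator F x} ⊆ ({0, z} : Set ℝ) := by
      intro x hx
      by_contra hx'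
      apply hx
      simp only [Set.mem_insert_iff, Set.mem_singleton_iff, not_or] at hx'
      obtain ⟨hx0, hxz⟩ := hx'
      by_cases hmem : x ∈ Ioo 0 z
      · rw [Set.indicator_of_mem hmem]
      · rw [Set.indicator_of_notMem hmem]
        simp only [Set.mem_Ioo, not_and_or, not_lt] at hmem
        rcases hmem with hx1 | hx1
        · show gammaPDF a r x * gammaPDF b r (z - x) = 0
          rw [gammaPDF_of_neg (lt_of_le_of_ne hx1 hx0), zero_mul]
        · show gammaPDF a r x * gammaPDF b r (z - x) = 0
          have hzx : z - x < 0 := by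
            rcases lt_or_eq_of_le hx1 with hlt | heq
            · linarith
            · exact absurd heq.symm hxz
          rw [gammaPDF_of_neg hzx, mul_zero]
    have hae : F =ᵐ[volume] (Ioo 0 z).indicator F :=
      ae_iff.mpr (measure_mono_null hsub hnull)
    have hexpand : ∀ x ∈ Ioo 0 z, F x =
        ENNReal.ofReal (r ^ a / Gamma a * (r ^ b / Gamma b) * Real.exp (-(r*z))) *
          ENNReal.ofReal (x ^ (a-1) * (z - x) ^ (b-1)) := by
      intro x hx
      have hx0 : (0:ℝ) ≤ x := hx.1.le
      have hxz : (0:ℝ) ≤ z - x := by linarith [hx.2]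
      have hexp : Real.exp (-(r*x)) * Real.exp (-(r*(z-x))) = Real.exp (-(r*z)) := by
        rw [← Real.exp_add]; ring_nf
      show gammaPDF a r x * gammaPDF b r (z - x) = _
      rw [gammaPDF_of_nonneg hx0, gammaPDF_of_nonneg hxz,
        ← ENNReal.ofReal_mul (by positivity), ← ENNReal.ofReal_mul (by positivity)]
      congr 1
      rw [← hexp]
      ring
    calc h z = ∫⁻ x, F x := rfl
      _ = ∫⁻ x, (Ioo 0 z).indicator F x := lintegral_congr_ae hae
      _ = ∫⁻ x in Ioo 0 z, F x := lintegral_indicator measurableSet_Ioo F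
      _ = ∫⁻ x in Ioo 0 z,
            ENNReal.ofReal (r ^ a / Gamma a * (r ^ b / Gamma b) * Real.exp (-(r*z))) *
              ENNReal.ofReal (x ^ (a-1) * (z - x) ^ (b-1)) :=
          setLIntegral_congr_fun measurableSet_Ioo hexpand
      _ = ENNReal.ofReal (r ^ a / Gamma a * (r ^ b / Gamma b) * Real.exp (-(r*z))) *
            ∫⁻ x in Ioo 0 z, ENNReal.ofReal (x ^ (a-1) * (z - x) ^ (b-1)) :=
          lintegral_const_mul' _ _ ENNReal.ofReal_ne_top
      _ = D * ENNReal.ofReal (z ^ (a+b-1) * Real.exp (-(r*z))) := by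
          rw [lintegral_beta_scale a b hz, ← hB, hD,
            ENNReal.ofReal_mul (by positivity : (0:ℝ) ≤ r ^ a / Gamma a * (r ^ b / Gamma b)),
            ENNReal.ofReal_mul (by positivity : (0:ℝ) ≤ z ^ (a+b-1))]
          ring
  -- splitting lemma
  have hsplit : ∀ φ : ℝ → ℝ≥0∞, (∀ z : ℝ, z < 0 → φ z = 0) →
      ∫⁻ z, φ z = ∫⁻ z in Ioi (0:ℝ), φ z := by
    intro φ hφ
    rw [← lintegral_add_compl φ (measurableSet_Ici : MeasurableSet (Ici (0:ℝ))), compl_Ici]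
    have hIio : ∫⁻ z in Iio (0:ℝ), φ z = 0 := by
      rw [setLIntegral_congr_fun measurableSet_Iio
        (fun ⦃z⦄ (hz : z < 0) => hφ z hz), lintegral_zero]
    rw [hIio, add_zero,
      show volume.restrict (Ici (0:ℝ)) = volume.restrict (Ioi 0) from
        (Measure.restrict_congr_set Ioi_ae_eq_Ici).symm]
  set J := ∫⁻ z in Ioi (0:ℝ), ENNReal.ofReal (z ^ (a+b-1) * Real.exp (-(r*z))) with hJ
  have hmeasJ : Measurable fun z : ℝ => ENNReal.ofReal (z ^ (a+b-1) * Real.exp (-(r*z))) :=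
    (((measurable_id.pow_const _).mul
      ((measurable_const.mul measurable_id).neg.exp))).ennreal_ofReal
  -- total mass of h
  have hDJ : D * J = 1 := by
    haveI := isProbabilityMeasure_gammaMeasure ha hr
    haveI := isProbabilityMeasure_gammaMeasure hb hr
    haveI : IsProbabilityMeasure (volume.withDensity h) := by
      rw [← hconv]; infer_instance
    have h1 : ∫⁻ z, h z = 1 := by
      have := this.measure_univ
      rwa [withDensity_apply h MeasurableSet.univ, Measure.restrict_univ] at this
    rw [← h1, hsplit h hneg,
      setLIntegral_congr_fun measurableSet_Ioi (fun ⦃z⦄ hz => hpos z hz),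
      lintegral_const_mul D hmeasJ]
  -- total mass of the (a+b) gamma pdf
  have hCJ : ENNReal.ofReal (r ^ (a+b) / Gamma (a+b)) * J = 1 := by
    have h1 := lintegral_gammaPDF_eq_one (add_pos ha hb) hr
    rw [← h1, hsplit (gammaPDF (a+b) r) (fun z hz => gammaPDF_of_neg hz),
      setLIntegral_congr_fun measurableSet_Ioi (fun ⦃z⦄ (hz : (0:ℝ) < z) => by
        rw [gammaPDF_of_nonneg hz.le, mul_assoc,
          ENNReal.ofReal_mul (by positivity)]),
      lintegral_const_mul _ hmeasJ]
  have hDval : D = ENNReal.ofReal (r ^ (a+b) / Gamma (a+b)) := by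
    calc D = D * (ENNReal.ofReal (r ^ (a+b) / Gamma (a+b)) * J) := by rw [hCJ, mul_one]
      _ = ENNReal.ofReal (r ^ (a+b) / Gamma (a+b)) * (D * J) := by ring
      _ = ENNReal.ofReal (r ^ (a+b) / Gamma (a+b)) := by rw [hDJ, mul_one]
  -- conclude
  have haefinal : h =ᵐ[volume] gammaPDF (a+b) r := by
    have hsub : {z : ℝ | ¬ h z = gammaPDF (a+b) r z} ⊆ ({0} : Set ℝ) := by
      intro z hz
      by_contra hz'
      apply hz
      simp only [Set.mem_singleton_iff] at hz'
      rcases lt_trichotomy z 0 with h0 | h0 | h0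
      · rw [hneg z h0, gammaPDF_of_neg h0]
      · exact absurd h0 hz'
      · rw [hpos z h0, hDval, gammaPDF_of_nonneg h0.le, mul_assoc,
          ENNReal.ofReal_mul hc,
          ENNReal.ofReal_mul (by positivity : (0:ℝ) ≤ z ^ (a+b-1))]
    exact ae_iff.mpr (measure_mono_null hsub (measure_singleton 0))
  rw [hconv, withDensity_congr_ae haefinal]
  rfl

set_option linter.unusedSectionVars false
section Plumbing
variable {Ω : Type*} [MeasurableSpace Ω] {P : Measure Ω} [IsProbabilityMeasure P]

lemma indep_map_add_conv {X Y : Ω → ℝ} (hX : Measurable X) (hY : Measurable Y)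
    (h : IndepFun X Y P) :
    P.map (fun ω => X ω + Y ω) = Measure.conv (P.map X) (P.map Y) := by
  have hpair := (ProbabilityTheory.indepFun_iff_map_prod_eq_prod_map_map
    hX.aemeasurable hY.aemeasurable).mp h
  show _ = Measure.map (fun p : ℝ × ℝ => p.1 + p.2) ((P.map X).prod (P.map Y))
  rw [← hpair, Measure.map_map measurable_add (hX.prodMk hY)]
  rfl

lemma indepFun_finsetSum {ι : Type*} {f : ι → Ω → ℝ} (hmeas : ∀ i, Measurable (f i))
    (h : iIndepFun f P) {s t : Finset ι}
    (hst : Disjoint s t) :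
    IndepFun (fun ω => ∑ i ∈ s, f i ω) (fun ω => ∑ i ∈ t, f i ω) P := by
  have h' := (h.indepFun_finset s t hst hmeas).comp
    (φ := fun v : ((s : Finset ι) : Type _) → ℝ => ∑ i, v i)
    (ψ := fun v : ((t : Finset ι) : Type _) → ℝ => ∑ i, v i)
    (Finset.measurable_sum Finset.univ (fun i _ => measurable_pi_apply i))
    (Finset.measurable_sum Finset.univ (fun i _ => measurable_pi_apply i))
  have e1 : (fun ω => ∑ i ∈ s, f i ω) =
      ((fun v : ((s : Finset ι) : Type _) → ℝ => ∑ i, v i) ∘ fun ω (i : s) => f i ω) := by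
    funext ω
    exact (Finset.sum_coe_sort s (fun i => f i ω)).symm
  have e2 : (fun ω => ∑ i ∈ t, f i ω) =
      ((fun v : ((t : Finset ι) : Type _) → ℝ => ∑ i, v i) ∘ fun ω (i : t) => f i ω) := by
    funext ω
    exact (Finset.sum_coe_sort t (fun i => f i ω)).symm
  rw [e1, e2]
  exact h'

lemma map_finsetSum_union {ι : Type*} [DecidableEq ι] {f : ι → Ω → ℝ} (hmeas : ∀ i, Measurable (f i))
    (h : iIndepFun f P) {s t : Finset ι}
    (hst : Disjoint s t) :
    P.map (fun ω => ∑ i ∈ s ∪ t, f i ω) =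
      Measure.conv (P.map (fun ω => ∑ i ∈ s, f i ω)) (P.map (fun ω => ∑ i ∈ t, f i ω)) := by
  have hsum : (fun ω => ∑ i ∈ s ∪ t, f i ω)
      = fun ω => (∑ i ∈ s, f i ω) + ∑ i ∈ t, f i ω := by
    funext ω; exact Finset.sum_union hst
  rw [hsum]
  exact indep_map_add_conv (Finset.measurable_sum s (fun i _ => hmeas i))
    (Finset.measurable_sum t (fun i _ => hmeas i)) (indepFun_finsetSum hmeas h hst)

lemma map_sum_gamma {ι : Type*} {f : ι → Ω → ℝ} (hmeas : ∀ i, Measurable (f i))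
    (h : iIndepFun f P) {r : ℝ} (hr : 0 < r) (a : ι → ℝ)
    (s : Finset ι) :
    s.Nonempty → (∀ i ∈ s, 0 < a i) →
    (∀ i ∈ s, P.map (f i) = gammaMeasure (a i) r) →
    P.map (fun ω => ∑ i ∈ s, f i ω) = gammaMeasure (∑ i ∈ s, a i) r := by
  classical
  induction s using Finset.cons_induction with
  | empty => intro hne; exact absurd hne (by simp)
  | cons i s hi ih =>
    intro _ hpos hlaw
    rcases s.eq_empty_or_nonempty with rfl | hs
    · simp only [Finset.cons_empty, Finset.sum_singleton]
      exact hlaw i (by simp)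
    · have hsum : (fun ω => ∑ j ∈ Finset.cons i s hi, f j ω)
          = fun ω => f i ω + ∑ j ∈ s, f j ω := by
        funext ω; rw [Finset.sum_cons]
      have hindep : IndepFun (f i) (fun ω => ∑ j ∈ s, f j ω) P := by
        have := indepFun_finsetSum hmeas h
          (s := {i}) (t := s) (Finset.disjoint_singleton_left.mpr hi)
        simpa using this
      rw [hsum, indep_map_add_conv (hmeas i)
        (Finset.measurable_sum s (fun j _ => hmeas j)) hindep,
        hlaw i (Finset.mem_cons_self i s),
        ih hs (fun j hj => hpos j (Finset.mem_cons_of_mem hj))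
          (fun j hj => hlaw j (Finset.mem_cons_of_mem hj)),
        gammaMeasure_conv (hpos i (Finset.mem_cons_self i s))
          (Finset.sum_pos (fun j hj => hpos j (Finset.mem_cons_of_mem hj)) hs) hr,
        Finset.sum_cons]

lemma map_neg_fun {X : Ω → ℝ} (hX : Measurable X) :
    P.map (fun ω => -(X ω)) = (P.map X).map (fun x : ℝ => -x) := by
  rw [Measure.map_map measurable_neg hX]
  rfl

end Plumbing


/-- Infinite divisibility of the Arete(α,θ,λ) distribution: if
`Z (inl i) ~ Gamma(α/n, θ)`, `Z (inr (inl i)) ~ Gamma(α/n, θ)`,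
`Z (inr (inr (inl i))) ~ Gamma(1/n, λ)`, `Z (inr (inr (inr i))) ~ Gamma(1/n, λ)`
are `4n` independent random variables (scale parameters, i.e. rates `θ⁻¹`, `λ⁻¹`),
and `A₁, A₂ ~ Gamma(α, θ)`, `B₁, B₂ ~ Gamma(1, λ)` are 4 independent random
variables (so that `B₁ - B₂ ~ Laplace(λ)` and `A₁ - A₂ + (B₁ - B₂) ~ Arete(α,θ,λ)`),
then `∑ i, (X_{1i} - X_{2i} + (Y_{1i} - Y_{2i}))` is Arete(α,θ,λ) distributed. -/

theorem arete_infinitely_divisible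
    {Ω : Type*} [MeasurableSpace Ω] (P : Measure Ω) [IsProbabilityMeasure P]
    (α θ lam : ℝ) (hα : 0 < α) (hθ : 0 < θ) (hlam : 0 < lam) (n : ℕ) (hn : 0 < n)
    (Z : (Fin n ⊕ Fin n ⊕ Fin n ⊕ Fin n) → Ω → ℝ)
    (hZmeas : ∀ i, Measurable (Z i))
    (hZindep : iIndepFun Z P)
    (hZdist₁ : ∀ i : Fin n, P.map (Z (Sum.inl i)) = gammaMeasure (α / n) θ⁻¹)
    (hZdist₂ : ∀ i : Fin n, P.map (Z (Sum.inr (Sum.inl i))) = gammaMeasure (α / n) θ⁻¹)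
    (hZdist₃ : ∀ i : Fin n,
      P.map (Z (Sum.inr (Sum.inr (Sum.inl i)))) = gammaMeasure (1 / n) lam⁻¹)
    (hZdist₄ : ∀ i : Fin n,
      P.map (Z (Sum.inr (Sum.inr (Sum.inr i)))) = gammaMeasure (1 / n) lam⁻¹)
    (W : Fin 4 → Ω → ℝ)
    (hWmeas : ∀ i, Measurable (W i))
    (hWindep : iIndepFun W P)
    (hW₀ : P.map (W 0) = gammaMeasure α θ⁻¹)
    (hW₁ : P.map (W 1) = gammaMeasure α θ⁻¹)
    (hW₂ : P.map (W 2) = gammaMeasure 1 lam⁻¹)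
    (hW₃ : P.map (W 3) = gammaMeasure 1 lam⁻¹) :
    P.map (fun ω => ∑ i : Fin n,
        (Z (Sum.inl i) ω - Z (Sum.inr (Sum.inl i)) ω +
          (Z (Sum.inr (Sum.inr (Sum.inl i))) ω - Z (Sum.inr (Sum.inr (Sum.inr i))) ω))) =
    P.map (fun ω => W 0 ω - W 1 ω + (W 2 ω - W 3 ω)) := by
  classical
  have hnR : (0:ℝ) < n := Nat.cast_pos.mpr hn
  have hθ' : (0:ℝ) < θ⁻¹ := inv_pos.mpr hθ
  have hlam' : (0:ℝ) < lam⁻¹ := inv_pos.mpr hlam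
  -- signed families
  set ε : (Fin n ⊕ Fin n ⊕ Fin n ⊕ Fin n) → ℝ :=
    Sum.elim (fun _ => 1) (Sum.elim (fun _ => -1) (Sum.elim (fun _ => 1) (fun _ => -1)))
    with hε
  set G : (Fin n ⊕ Fin n ⊕ Fin n ⊕ Fin n) → Ω → ℝ := fun j => (fun x => ε j * x) ∘ Z j
    with hG
  have hGmeas : ∀ j, Measurable (G j) := fun j => (measurable_const_mul (ε j)).comp (hZmeas j)
  have hGindep : iIndepFun G P :=
    hZindep.comp (fun j x => ε j * x) (fun j => measurable_const_mul _)
  set εW : Fin 4 → ℝ := ![1, -1, 1, -1] with hεW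
  set GW : Fin 4 → Ω → ℝ := fun j => (fun x => εW j * x) ∘ W j with hGW
  have hGWmeas : ∀ j, Measurable (GW j) := fun j => (measurable_const_mul (εW j)).comp (hWmeas j)
  have hGWindep : iIndepFun GW P :=
    hWindep.comp (fun j x => εW j * x) (fun j => measurable_const_mul _)
  -- blocks
  set e₁ : Fin n ↪ (Fin n ⊕ Fin n ⊕ Fin n ⊕ Fin n) := ⟨Sum.inl, Sum.inl_injective⟩ with he₁
  set e₂ : Fin n ↪ (Fin n ⊕ Fin n ⊕ Fin n ⊕ Fin n) :=
    ⟨fun i => Sum.inr (Sum.inl i),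
      fun i j hij => Sum.inl_injective (Sum.inr_injective hij)⟩ with he₂
  set e₃ : Fin n ↪ (Fin n ⊕ Fin n ⊕ Fin n ⊕ Fin n) :=
    ⟨fun i => Sum.inr (Sum.inr (Sum.inl i)),
      fun i j hij => Sum.inl_injective (Sum.inr_injective (Sum.inr_injective hij))⟩ with he₃
  set e₄ : Fin n ↪ (Fin n ⊕ Fin n ⊕ Fin n ⊕ Fin n) :=
    ⟨fun i => Sum.inr (Sum.inr (Sum.inr i)),
      fun i j hij => Sum.inr_injective (Sum.inr_injective (Sum.inr_injective hij))⟩ with he₄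
  set s₁ := Finset.univ.map e₁ with hs₁
  set s₂ := Finset.univ.map e₂ with hs₂
  set s₃ := Finset.univ.map e₃ with hs₃
  set s₄ := Finset.univ.map e₄ with hs₄
  have hmem : ∀ j, (j ∈ s₁ ↔ ∃ i, Sum.inl i = j) ∧ (j ∈ s₂ ↔ ∃ i, Sum.inr (Sum.inl i) = j)
      ∧ (j ∈ s₃ ↔ ∃ i, Sum.inr (Sum.inr (Sum.inl i)) = j)
      ∧ (j ∈ s₄ ↔ ∃ i, Sum.inr (Sum.inr (Sum.inr i)) = j) := by
    intro j
    refine ⟨?_, ?_, ?_, ?_⟩ <;>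
      simp [hs₁, hs₂, hs₃, hs₄, he₁, he₂, he₃, he₄, Finset.mem_map, Function.Embedding.coeFn_mk] <;> exact Iff.rfl
  have hd12 : Disjoint s₁ s₂ := by
    rw [Finset.disjoint_left]
    intro x hx1 hx2
    obtain ⟨i, rfl⟩ := ((hmem x).1).mp hx1
    obtain ⟨j, hj⟩ := ((hmem _).2.1).mp hx2
    exact absurd hj (by simp)
  have hd34 : Disjoint s₃ s₄ := by
    rw [Finset.disjoint_left]
    intro x hx1 hx2
    obtain ⟨i, rfl⟩ := ((hmem x).2.2.1).mp hx1
    obtain ⟨j, hj⟩ := ((hmem _).2.2.2).mp hx2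
    exact absurd hj (by simp)
  have hd12_34 : Disjoint (s₁ ∪ s₂) (s₃ ∪ s₄) := by
    rw [Finset.disjoint_left]
    intro x hx1 hx2
    rw [Finset.mem_union] at hx1 hx2
    rcases hx1 with h1 | h1 <;> rcases hx2 with h2 | h2
    · obtain ⟨i, rfl⟩ := ((hmem x).1).mp h1
      obtain ⟨j, hj⟩ := ((hmem _).2.2.1).mp h2
      exact absurd hj (by simp)
    · obtain ⟨i, rfl⟩ := ((hmem x).1).mp h1
      obtain ⟨j, hj⟩ := ((hmem _).2.2.2).mp h2
      exact absurd hj (by simp)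
    · obtain ⟨i, rfl⟩ := ((hmem x).2.1).mp h1
      obtain ⟨j, hj⟩ := ((hmem _).2.2.1).mp h2
      exact absurd hj (by simp)
    · obtain ⟨i, rfl⟩ := ((hmem x).2.1).mp h1
      obtain ⟨j, hj⟩ := ((hmem _).2.2.2).mp h2
      exact absurd hj (by simp)
  have huniv : (Finset.univ : Finset (Fin n ⊕ Fin n ⊕ Fin n ⊕ Fin n))
      = (s₁ ∪ s₂) ∪ (s₃ ∪ s₄) := by
    ext j
    simp only [Finset.mem_univ, true_iff, Finset.mem_union]
    rcases j with i | (i | (i | i))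
    · exact Or.inl (Or.inl (((hmem _).1).mpr ⟨i, rfl⟩))
    · exact Or.inl (Or.inr (((hmem _).2.1).mpr ⟨i, rfl⟩))
    · exact Or.inr (Or.inl (((hmem _).2.2.1).mpr ⟨i, rfl⟩))
    · exact Or.inr (Or.inr (((hmem _).2.2.2).mpr ⟨i, rfl⟩))
  -- LHS as a total sum
  have hLHS : (fun ω => ∑ i : Fin n,
      (Z (Sum.inl i) ω - Z (Sum.inr (Sum.inl i)) ω +
        (Z (Sum.inr (Sum.inr (Sum.inl i))) ω - Z (Sum.inr (Sum.inr (Sum.inr i))) ω)))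
      = fun ω => ∑ j : (Fin n ⊕ Fin n ⊕ Fin n ⊕ Fin n), G j ω := by
    funext ω
    rw [Fintype.sum_sum_type, Fintype.sum_sum_type, Fintype.sum_sum_type]
    simp only [hG, hε, Function.comp_apply, Sum.elim_inl, Sum.elim_inr, one_mul, neg_one_mul]
    rw [Finset.sum_add_distrib]
    rw [Finset.sum_sub_distrib, Finset.sum_sub_distrib, Finset.sum_neg_distrib,
      Finset.sum_neg_distrib]
    ring
  -- block sums of Z
  have hlawZ₁ : P.map (fun ω => ∑ j ∈ s₁, Z j ω) = gammaMeasure α θ⁻¹ := by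
    have hne : s₁.Nonempty := ⟨Sum.inl ⟨0, hn⟩, ((hmem _).1).mpr ⟨⟨0, hn⟩, rfl⟩⟩
    have := map_sum_gamma hZmeas hZindep hθ' (fun _ => α / n) s₁ hne
      (fun j _ => div_pos hα hnR)
      (fun j hj => by obtain ⟨i, rfl⟩ := ((hmem j).1).mp hj; exact hZdist₁ i)
    rw [this]
    congr 1
    rw [Finset.sum_const, Finset.card_map, Finset.card_univ, Fintype.card_fin,
      nsmul_eq_mul]
    field_simp
  have hlawZ₂ : P.map (fun ω => ∑ j ∈ s₂, Z j ω) = gammaMeasure α θ⁻¹ := by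
    have hne : s₂.Nonempty := ⟨Sum.inr (Sum.inl ⟨0, hn⟩), ((hmem _).2.1).mpr ⟨⟨0, hn⟩, rfl⟩⟩
    have := map_sum_gamma hZmeas hZindep hθ' (fun _ => α / n) s₂ hne
      (fun j _ => div_pos hα hnR)
      (fun j hj => by obtain ⟨i, rfl⟩ := ((hmem j).2.1).mp hj; exact hZdist₂ i)
    rw [this]
    congr 1
    rw [Finset.sum_const, Finset.card_map, Finset.card_univ, Fintype.card_fin, nsmul_eq_mul]
    field_simp
  have hlawZ₃ : P.map (fun ω => ∑ j ∈ s₃, Z j ω) = gammaMeasure 1 lam⁻¹ := by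
    have hne : s₃.Nonempty :=
      ⟨Sum.inr (Sum.inr (Sum.inl ⟨0, hn⟩)), ((hmem _).2.2.1).mpr ⟨⟨0, hn⟩, rfl⟩⟩
    have := map_sum_gamma hZmeas hZindep hlam' (fun _ => 1 / (n:ℝ)) s₃ hne
      (fun j _ => div_pos one_pos hnR)
      (fun j hj => by obtain ⟨i, rfl⟩ := ((hmem j).2.2.1).mp hj; exact hZdist₃ i)
    rw [this]
    congr 1
    rw [Finset.sum_const, Finset.card_map, Finset.card_univ, Fintype.card_fin, nsmul_eq_mul]
    field_simp
  have hlawZ₄ : P.map (fun ω => ∑ j ∈ s₄, Z j ω) = gammaMeasure 1 lam⁻¹ := by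
    have hne : s₄.Nonempty :=
      ⟨Sum.inr (Sum.inr (Sum.inr ⟨0, hn⟩)), ((hmem _).2.2.2).mpr ⟨⟨0, hn⟩, rfl⟩⟩
    have := map_sum_gamma hZmeas hZindep hlam' (fun _ => 1 / (n:ℝ)) s₄ hne
      (fun j _ => div_pos one_pos hnR)
      (fun j hj => by obtain ⟨i, rfl⟩ := ((hmem j).2.2.2).mp hj; exact hZdist₄ i)
    rw [this]
    congr 1
    rw [Finset.sum_const, Finset.card_map, Finset.card_univ, Fintype.card_fin, nsmul_eq_mul]
    field_simp
  -- block sums of G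
  have hmap₁ : P.map (fun ω => ∑ j ∈ s₁, G j ω) = gammaMeasure α θ⁻¹ := by
    have hfun : (fun ω => ∑ j ∈ s₁, G j ω) = fun ω => ∑ j ∈ s₁, Z j ω := by
      funext ω
      refine Finset.sum_congr rfl (fun j hj => ?_)
      obtain ⟨i, rfl⟩ := ((hmem j).1).mp hj
      simp [hG, hε]
    rw [hfun, hlawZ₁]
  have hmap₂ : P.map (fun ω => ∑ j ∈ s₂, G j ω)
      = (gammaMeasure α θ⁻¹).map (fun x : ℝ => -x) := by
    have hfun : (fun ω => ∑ j ∈ s₂, G j ω) = fun ω => -(∑ j ∈ s₂, Z j ω) := by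
      funext ω
      rw [← Finset.sum_neg_distrib]
      refine Finset.sum_congr rfl (fun j hj => ?_)
      obtain ⟨i, rfl⟩ := ((hmem j).2.1).mp hj
      simp [hG, hε]
    rw [hfun, map_neg_fun (Finset.measurable_sum _ (fun j _ => hZmeas j)), hlawZ₂]
  have hmap₃ : P.map (fun ω => ∑ j ∈ s₃, G j ω) = gammaMeasure 1 lam⁻¹ := by
    have hfun : (fun ω => ∑ j ∈ s₃, G j ω) = fun ω => ∑ j ∈ s₃, Z j ω := by
      funext ω
      refine Finset.sum_congr rfl (fun j hj => ?_)
      obtain ⟨i, rfl⟩ := ((hmem j).2.2.1).mp hj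
      simp [hG, hε]
    rw [hfun, hlawZ₃]
  have hmap₄ : P.map (fun ω => ∑ j ∈ s₄, G j ω)
      = (gammaMeasure 1 lam⁻¹).map (fun x : ℝ => -x) := by
    have hfun : (fun ω => ∑ j ∈ s₄, G j ω) = fun ω => -(∑ j ∈ s₄, Z j ω) := by
      funext ω
      rw [← Finset.sum_neg_distrib]
      refine Finset.sum_congr rfl (fun j hj => ?_)
      obtain ⟨i, rfl⟩ := ((hmem j).2.2.2).mp hj
      simp [hG, hε]
    rw [hfun, map_neg_fun (Finset.measurable_sum _ (fun j _ => hZmeas j)), hlawZ₄]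
  -- RHS as a total sum
  have hRHS : (fun ω => W 0 ω - W 1 ω + (W 2 ω - W 3 ω))
      = fun ω => ∑ j ∈ (Finset.univ : Finset (Fin 4)), GW j ω := by
    funext ω
    rw [Fin.sum_univ_four]
    simp [hGW, hεW]
    ring
  have huniv4 : (Finset.univ : Finset (Fin 4)) = ({0} ∪ {1}) ∪ ({2} ∪ {3}) := by decide
  have hmapW₀ : P.map (fun ω => ∑ j ∈ ({0} : Finset (Fin 4)), GW j ω)
      = gammaMeasure α θ⁻¹ := by
    have hfun : (fun ω => ∑ j ∈ ({0} : Finset (Fin 4)), GW j ω) = W 0 := by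
      funext ω; simp [hGW, hεW]
    rw [hfun, hW₀]
  have hmapW₁ : P.map (fun ω => ∑ j ∈ ({1} : Finset (Fin 4)), GW j ω)
      = (gammaMeasure α θ⁻¹).map (fun x : ℝ => -x) := by
    have hfun : (fun ω => ∑ j ∈ ({1} : Finset (Fin 4)), GW j ω) = fun ω => -(W 1 ω) := by
      funext ω; simp [hGW, hεW]
    rw [hfun, map_neg_fun (hWmeas 1), hW₁]
  have hmapW₂ : P.map (fun ω => ∑ j ∈ ({2} : Finset (Fin 4)), GW j ω)
      = gammaMeasure 1 lam⁻¹ := by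
    have hfun : (fun ω => ∑ j ∈ ({2} : Finset (Fin 4)), GW j ω) = W 2 := by
      funext ω; simp [hGW, hεW]
    rw [hfun, hW₂]
  have hmapW₃ : P.map (fun ω => ∑ j ∈ ({3} : Finset (Fin 4)), GW j ω)
      = (gammaMeasure 1 lam⁻¹).map (fun x : ℝ => -x) := by
    have hfun : (fun ω => ∑ j ∈ ({3} : Finset (Fin 4)), GW j ω) = fun ω => -(W 3 ω) := by
      funext ω; simp [hGW, hεW]
    rw [hfun, map_neg_fun (hWmeas 3), hW₃]
  rw [hLHS, hRHS, huniv, huniv4,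
    map_finsetSum_union hGmeas hGindep hd12_34,
    map_finsetSum_union hGmeas hGindep hd12,
    map_finsetSum_union hGmeas hGindep hd34,
    map_finsetSum_union hGWmeas hGWindep
      (show Disjoint ({0} ∪ {1} : Finset (Fin 4)) ({2} ∪ {3}) by decide),
    map_finsetSum_union hGWmeas hGWindep (show Disjoint ({0} : Finset (Fin 4)) {1} by decide),
    map_finsetSum_union hGWmeas hGWindep (show Disjoint ({2} : Finset (Fin 4)) {3} by decide),
    hmap₁, hmap₂, hmap₃, hmap₄, hmapW₀, hmapW₁, hmapW₂, hmapW₃]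
end

section
/- Let f_A be the Arete(α,θ,λ) density with λ ≤ Δ/ln 2 and Δ > 0. Then for all t ≥ -Δ/2: f_A(t + Δ) ≥ (1/4) · c_{Δ_Γ} · f_Γ(|t + Δ| + Δ_Γ), where c_{Δ_Γ} = ∫_0^{Δ_Γ} f_Γ(x) dx for any Δ_Γ > 0 and f_Γ is the Gamma(α,θ) density. -/
open MeasureTheory Set

noncomputable def fg (α θ : ℝ) (x : ℝ) : ℝ :=
  if 0 < x then Real.exp (-x / θ) * x ^ (α - 1) / (Real.Gamma α * θ ^ α) else 0

variable {α θ : ℝ}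

lemma fg_nonneg (hα : 0 < α) (hθ : 0 < θ) (x : ℝ) : 0 ≤ fg α θ x := by
  unfold fg
  split_ifs with h
  · have := Real.Gamma_pos_of_pos hα
    positivity
  · exact le_refl 0

lemma fg_anti (hα : 0 < α) (hα1 : α ≤ 1) (hθ : 0 < θ) {a b : ℝ} (ha : 0 < a) (hab : a ≤ b) :
    fg α θ b ≤ fg α θ a := by
  have hb : 0 < b := lt_of_lt_of_le ha hab
  have hΓ : 0 < Real.Gamma α * θ ^ α := by
    have := Real.Gamma_pos_of_pos hα; positivity
  unfold fg
  rw [if_pos ha, if_pos hb]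
  apply (div_le_div_iff_of_pos_right hΓ).mpr
  have h2 : b ^ (α-1) ≤ a ^ (α-1) := Real.rpow_le_rpow_of_nonpos ha hab (by linarith)
  have h1 : Real.exp (-b/θ) ≤ Real.exp (-a/θ) :=
    Real.exp_le_exp.mpr ((div_le_div_iff_of_pos_right hθ).mpr (by linarith))
  exact mul_le_mul h1 h2 (Real.rpow_nonneg hb.le _) (Real.exp_nonneg _)

lemma fg_meas : Measurable (fg α θ) := by
  unfold fg
  exact Measurable.ite measurableSet_Ioi
    ((((measurable_id.neg.div_const θ).exp).mul
      (measurable_id.pow_const _ |>.comp measurable_id)).div_const _) measurable_const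

lemma fg_integrableOn (hα : 0 < α) (hθ : 0 < θ) : IntegrableOn (fg α θ) (Ioi (0:ℝ)) := by
  have h := integrableOn_rpow_mul_exp_neg_mul_rpow (p := 1) (s := α - 1) (b := 1/θ)
    (by linarith) zero_lt_one (by positivity)
  refine IntegrableOn.congr_fun (h.div_const (Real.Gamma α * θ ^ α)) (fun x hx => ?_)
    measurableSet_Ioi
  have hx0 : (0:ℝ) < x := hx
  unfold fg
  rw [if_pos hx0, Real.rpow_one, show -x/θ = -(1/θ)*x by ring]
  ring

lemma fg_integral (hα : 0 < α) (hθ : 0 < θ) : ∫ x in Ioi (0:ℝ), fg α θ x = 1 := by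
  have hθi : (0:ℝ) < θ⁻¹ := by positivity
  have h := Real.integral_rpow_mul_exp_neg_mul_Ioi hα hθi
  have hΓ : Real.Gamma α * θ ^ α ≠ 0 := by
    have := Real.Gamma_pos_of_pos hα; positivity
  have hcong : ∫ x in Ioi (0:ℝ), fg α θ x
      = ∫ x in Ioi (0:ℝ), x ^ (α-1) * Real.exp (-(θ⁻¹ * x)) / (Real.Gamma α * θ ^ α) := by
    refine setIntegral_congr_fun measurableSet_Ioi (fun x hx => ?_)
    have hx0 : (0:ℝ) < x := hx
    unfold fg
    rw [if_pos hx0, show -x/θ = -(θ⁻¹*x) by ring]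
    ring
  rw [hcong, integral_div, h, one_div, inv_inv]
  rw [mul_comm, div_self hΓ]

noncomputable def fgg (α θ : ℝ) (t : ℝ) : ℝ := ∫ x in Ioi (0:ℝ), fg α θ (|t| + x) * fg α θ x

lemma fgg_nonneg (hα : 0 < α) (hθ : 0 < θ) (t : ℝ) : 0 ≤ fgg α θ t :=
  integral_nonneg fun x => mul_nonneg (fg_nonneg hα hθ _) (fg_nonneg hα hθ _)

lemma fgg_meas : Measurable (fgg α θ) := by
  have h : StronglyMeasurable (fun p : ℝ × ℝ => fg α θ (|p.1| + p.2) * fg α θ p.2) := by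
    refine Measurable.stronglyMeasurable ?_
    exact ((fg_meas.comp ((measurable_fst.abs).add measurable_snd)).mul
      (fg_meas.comp measurable_snd))
  exact (h.integral_prod_right' (ν := volume.restrict (Ioi 0))).measurable

lemma integrable_shift_mul (hα : 0 < α) (hα1 : α ≤ 1) (hθ : 0 < θ) {s : ℝ} (hs : s ≠ 0) :
    IntegrableOn (fun x => fg α θ (|s| + x) * fg α θ x) (Ioi (0:ℝ)) := by
  have hs0 : 0 < |s| := abs_pos.mpr hs
  refine Integrable.mono' ((fg_integrableOn hα hθ).const_mul (fg α θ |s|)) ?_ ?_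
  · exact ((fg_meas.comp (measurable_const.add measurable_id)).mul fg_meas).aestronglyMeasurable
  · refine (ae_restrict_iff' measurableSet_Ioi).mpr (ae_of_all _ fun x hx => ?_)
    have hx0 : (0:ℝ) < x := hx
    rw [Real.norm_eq_abs, abs_of_nonneg (mul_nonneg (fg_nonneg hα hθ _) (fg_nonneg hα hθ _))]
    exact mul_le_mul_of_nonneg_right (fg_anti hα hα1 hθ hs0 (by linarith)) (fg_nonneg hα hθ _)

lemma fgg_le (hα : 0 < α) (hα1 : α ≤ 1) (hθ : 0 < θ) {s : ℝ} (hs : s ≠ 0) :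
    fgg α θ s ≤ fg α θ |s| := by
  have hs0 : 0 < |s| := abs_pos.mpr hs
  have h1 : fgg α θ s ≤ ∫ x in Ioi (0:ℝ), fg α θ |s| * fg α θ x := by
    refine integral_mono_ae (integrable_shift_mul hα hα1 hθ hs)
      ((fg_integrableOn hα hθ).const_mul _) ?_
    refine (ae_restrict_iff' measurableSet_Ioi).mpr (ae_of_all _ fun x hx => ?_)
    have hx0 : (0:ℝ) < x := hx
    exact mul_le_mul_of_nonneg_right (fg_anti hα hα1 hθ hs0 (by linarith)) (fg_nonneg hα hθ _)
  calc fgg α θ s ≤ ∫ x in Ioi (0:ℝ), fg α θ |s| * fg α θ x := h1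
    _ = fg α θ |s| * ∫ x in Ioi (0:ℝ), fg α θ x := integral_const_mul _ _
    _ = fg α θ |s| := by rw [fg_integral hα hθ, mul_one]

lemma lemA (hα : 0 < α) (hα1 : α ≤ 1) (hθ : 0 < θ) {s ΔΓ : ℝ} (hs : s ≠ 0) (hΔΓ : 0 < ΔΓ) :
    (∫ x in Ioc (0:ℝ) ΔΓ, fg α θ x) * fg α θ (|s| + ΔΓ) ≤ fgg α θ s := by
  have hs0 : 0 < |s| := abs_pos.mpr hs
  have hint : IntegrableOn (fun x => fg α θ (|s| + x) * fg α θ x) (Ioi (0:ℝ)) :=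
    integrable_shift_mul hα hα1 hθ hs
  have h1 : ∫ x in Ioc (0:ℝ) ΔΓ, fg α θ x * fg α θ (|s| + ΔΓ)
      ≤ ∫ x in Ioc (0:ℝ) ΔΓ, fg α θ (|s| + x) * fg α θ x := by
    refine setIntegral_mono_on (((fg_integrableOn hα hθ).mono_set Ioc_subset_Ioi_self).mul_const _)
      (hint.mono_set Ioc_subset_Ioi_self) measurableSet_Ioc (fun x hx => ?_)
    rw [mul_comm]
    exact mul_le_mul_of_nonneg_right (fg_anti hα hα1 hθ (by linarith [hx.1]) (by linarith [hx.2]))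
      (fg_nonneg hα hθ _)
  have h2 : ∫ x in Ioc (0:ℝ) ΔΓ, fg α θ (|s| + x) * fg α θ x ≤ fgg α θ s := by
    refine setIntegral_mono_set hint ?_ (HasSubset.Subset.eventuallyLE Ioc_subset_Ioi_self)
    exact ae_of_all _ fun x => mul_nonneg (fg_nonneg hα hθ _) (fg_nonneg hα hθ _)
  calc (∫ x in Ioc (0:ℝ) ΔΓ, fg α θ x) * fg α θ (|s| + ΔΓ)
      = ∫ x in Ioc (0:ℝ) ΔΓ, fg α θ x * fg α θ (|s| + ΔΓ) := (integral_mul_const _ _).symm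
    _ ≤ _ := h1.trans h2

lemma fg_abs_integrable (hα : 0 < α) (hθ : 0 < θ) :
    Integrable (fun x : ℝ => fg α θ |x|) := by
  have hmeas : Measurable fun x : ℝ => fg α θ |x| := fg_meas.comp measurable_abs
  have hIoi : IntegrableOn (fun x : ℝ => fg α θ |x|) (Ioi (0:ℝ)) := by
    refine (fg_integrableOn hα hθ).congr_fun (fun x hx => ?_) measurableSet_Ioi
    rw [abs_of_pos hx]
  have hIio : IntegrableOn (fun x : ℝ => fg α θ |x|) (Iio (0:ℝ)) := by
    have h := (MeasurePreserving.integrableOn_comp_preimage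
      (Measure.measurePreserving_neg (volume : Measure ℝ))
      (Homeomorph.neg ℝ).measurableEmbedding
      (f := fun x : ℝ => fg α θ |x|) (s := Ioi (0:ℝ))).2 hIoi
    have hpre : (Neg.neg ⁻¹' Ioi (0:ℝ) : Set ℝ) = Iio 0 := by
      ext x; simp
    rw [hpre] at h
    refine h.congr_fun (fun x hx => ?_) measurableSet_Iio
    simp [Function.comp, abs_neg]
  have : IntegrableOn (fun x : ℝ => fg α θ |x|) (Iio 0 ∪ Ioi 0) := hIio.union hIoi
  refine this.integrable_of_ae_notMem_eq_zero (ae_of_all _ fun x hx => ?_)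
  have hx0 : x = 0 := by
    by_contra h
    rcases lt_or_gt_of_ne h with h1 | h1
    · exact hx (Or.inl h1)
    · exact hx (Or.inr h1)
  subst hx0
  simp [fg]

lemma ae_ne_const (T : ℝ) : ∀ᵐ x : ℝ, x ≠ T := by
  have h : (volume : Measure ℝ) {x : ℝ | ¬ x ≠ T} = 0 := by
    have : {x : ℝ | ¬ x ≠ T} = {T} := by ext x; simp
    rw [this]; exact measure_singleton T
  exact ae_iff.mpr h

lemma fL_integrand_integrable (hα : 0 < α) (hα1 : α ≤ 1) (hθ : 0 < θ) {lam : ℝ}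
    (hlam : 0 < lam) (T : ℝ) :
    Integrable (fun x : ℝ => fgg α θ (T - x) * (Real.exp (-|x|/lam)/(2*lam))) := by
  have hmeas : AEStronglyMeasurable
      (fun x : ℝ => fgg α θ (T - x) * (Real.exp (-|x|/lam)/(2*lam))) volume := by
    refine Measurable.aestronglyMeasurable ?_
    exact (fgg_meas.comp (measurable_const.sub measurable_id)).mul
      (((measurable_abs.neg.div_const lam).exp).div_const _)
  have hbound : Integrable (fun x : ℝ => fg α θ |T - x| * (1/(2*lam))) := by
    refine Integrable.mul_const ?_ _
    have h := (fg_abs_integrable hα hθ (α := α) (θ := θ)).comp_sub_left T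
    simpa using h
  refine hbound.mono' hmeas ?_
  filter_upwards [ae_ne_const T] with x hx
  have hne : T - x ≠ 0 := sub_ne_zero.mpr (Ne.symm hx)
  have h1 : fgg α θ (T - x) ≤ fg α θ |T - x| := fgg_le hα hα1 hθ hne
  have h2 : Real.exp (-|x|/lam)/(2*lam) ≤ 1/(2*lam) := by
    have hle : -|x|/lam ≤ 0 :=
      div_nonpos_of_nonpos_of_nonneg (neg_nonpos.2 (abs_nonneg x)) hlam.le
    have h1 : Real.exp (-|x|/lam) ≤ 1 := Real.exp_le_one_iff.mpr hle
    gcongr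
  rw [Real.norm_eq_abs, abs_of_nonneg (mul_nonneg (fgg_nonneg hα hθ _) (by positivity))]
  exact mul_le_mul h1 h2 (by positivity) (fg_nonneg hα hθ _)

lemma laplace_lower {lam Δ : ℝ} (hlam : 0 < lam) (hΔ : 0 < Δ)
    (hlamΔ : lam ≤ Δ / Real.log 2) :
    (1/4 : ℝ) ≤ ∫ x in Ioc (0:ℝ) Δ, Real.exp (-|x|/lam)/(2*lam) := by
  have hlog : (0:ℝ) < Real.log 2 := Real.log_pos (by norm_num)
  have hkey : Real.log 2 ≤ Δ / lam := by
    rw [le_div_iff₀ hlam]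
    calc Real.log 2 * lam = lam * Real.log 2 := mul_comm _ _
      _ ≤ Δ := by
        rw [← le_div_iff₀ hlog] at *
        exact hlamΔ
  have hexp : Real.exp (-(Δ/lam)) ≤ 1/2 := by
    calc Real.exp (-(Δ/lam)) ≤ Real.exp (-Real.log 2) := Real.exp_le_exp.mpr (by linarith)
      _ = 1/2 := by rw [Real.exp_neg, Real.exp_log (by norm_num)]; norm_num
  have hF : ∀ x : ℝ, HasDerivAt (fun y : ℝ => -lam * Real.exp (-y/lam)) (Real.exp (-x/lam)) x := by
    intro x
    have h1 : HasDerivAt (fun y : ℝ => -y/lam) (-1/lam) x := by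
      simpa using ((hasDerivAt_id x).neg.div_const lam)
    have h2 := (Real.hasDerivAt_exp (-x/lam)).comp x h1
    have h3 := h2.const_mul (-lam)
    refine h3.congr_deriv ?_
    rw [show -lam * (Real.exp (-x/lam) * (-1/lam)) = Real.exp (-x/lam) * (lam/lam) by ring,
      div_self hlam.ne', mul_one]
  have hcont : Continuous fun x : ℝ => Real.exp (-x/lam) := by continuity
  have hval : ∫ x in (0:ℝ)..Δ, Real.exp (-x/lam) = lam * (1 - Real.exp (-(Δ/lam))) := by
    rw [intervalIntegral.integral_eq_sub_of_hasDerivAt (fun x _ => hF x)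
      (hcont.intervalIntegrable _ _)]
    simp [neg_div]
    ring
  have heq : ∫ x in Ioc (0:ℝ) Δ, Real.exp (-|x|/lam)/(2*lam)
      = (∫ x in Ioc (0:ℝ) Δ, Real.exp (-x/lam)) / (2*lam) := by
    rw [← integral_div]
    refine setIntegral_congr_fun measurableSet_Ioc (fun x hx => ?_)
    rw [abs_of_pos hx.1]
  rw [heq, ← intervalIntegral.integral_of_le hΔ.le, hval]
  have hsimp : lam * (1 - Real.exp (-(Δ/lam))) / (2*lam) = (1 - Real.exp (-(Δ/lam)))/2 := by
    field_simp
  rw [hsimp]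
  linarith

lemma main_aux (α θ lam Δ : ℝ) (hα : 0 < α) (hα1 : α ≤ 1) (hθ : 0 < θ) (hlam : 0 < lam)
    (hΔ : 0 < Δ) (hlamΔ : lam ≤ Δ / Real.log 2) (t : ℝ) (ht : -Δ/2 ≤ t) {ΔΓ : ℝ}
    (hΔΓ : 0 < ΔΓ) :
    (1/4) * (∫ x in Ioc (0:ℝ) ΔΓ, fg α θ x) * fg α θ (|t+Δ| + ΔΓ)
      ≤ ∫ x : ℝ, fgg α θ (t + Δ - x) * (Real.exp (-|x|/lam)/(2*lam)) := by
  set T := t + Δ with hTdef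
  have hT2 : Δ/2 ≤ T := by rw [hTdef]; linarith
  have hT : 0 < T := by linarith
  set c := ∫ x in Ioc (0:ℝ) ΔΓ, fg α θ x with hc
  have hc0 : 0 ≤ c := setIntegral_nonneg measurableSet_Ioc fun x _ => fg_nonneg hα hθ x
  set K := fg α θ (|T| + ΔΓ) with hK
  have hK0 : 0 ≤ K := fg_nonneg hα hθ _
  set fL := fun x : ℝ => Real.exp (-|x|/lam)/(2*lam) with hfL
  have hfL0 : ∀ x, 0 ≤ fL x := fun x => by rw [hfL]; positivity
  have hfLcont : Continuous fL := by
    rw [hfL]; exact ((continuous_abs.neg.div_const lam).rexp).div_const _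
  have hInt : Integrable (fun x : ℝ => fgg α θ (T - x) * fL x) :=
    fL_integrand_integrable hα hα1 hθ hlam T
  have h1 : ∫ x in Ioc (0:ℝ) Δ, fgg α θ (T - x) * fL x ≤ ∫ x : ℝ, fgg α θ (T - x) * fL x :=
    setIntegral_le_integral hInt (ae_of_all _ fun x => mul_nonneg (fgg_nonneg hα hθ _) (hfL0 x))
  have hIntc : IntegrableOn (fun x : ℝ => (c * K) * fL x) (Ioc (0:ℝ) Δ) :=
    (hfLcont.integrableOn_Ioc).const_mul _
  have h2 : ∫ x in Ioc (0:ℝ) Δ, (c * K) * fL x ≤ ∫ x in Ioc (0:ℝ) Δ, fgg α θ (T - x) * fL x := by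
    refine integral_mono_ae hIntc hInt.integrableOn ?_
    filter_upwards [ae_restrict_of_ae (ae_ne_const T), ae_restrict_mem measurableSet_Ioc]
      with x hxne hxmem
    have hTx : T - x ≠ 0 := sub_ne_zero.mpr (Ne.symm hxne)
    have habs : |T - x| ≤ |T| := by
      rw [abs_of_pos hT]
      refine abs_le.mpr ⟨?_, ?_⟩ <;> [nlinarith [hxmem.2]; nlinarith [hxmem.1]]
    have hstep : c * K ≤ c * fg α θ (|T - x| + ΔΓ) := by
      rw [hK]
      refine mul_le_mul_of_nonneg_left (fg_anti hα hα1 hθ ?_ (by linarith)) hc0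
      have := abs_pos.mpr hTx
      linarith
    have hA : c * fg α θ (|T - x| + ΔΓ) ≤ fgg α θ (T - x) := by
      exact lemA hα hα1 hθ hTx hΔΓ
    exact mul_le_mul_of_nonneg_right (hstep.trans hA) (hfL0 x)
  have h4 : (1/4 : ℝ) ≤ ∫ x in Ioc (0:ℝ) Δ, fL x := laplace_lower hlam hΔ hlamΔ
  calc (1/4) * c * K = (c*K) * (1/4) := by ring
    _ ≤ (c*K) * ∫ x in Ioc (0:ℝ) Δ, fL x :=
        mul_le_mul_of_nonneg_left h4 (mul_nonneg hc0 hK0)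
    _ = ∫ x in Ioc (0:ℝ) Δ, (c*K) * fL x := (integral_const_mul _ _).symm
    _ ≤ ∫ x in Ioc (0:ℝ) Δ, fgg α θ (T - x) * fL x := h2
    _ ≤ _ := h1


/-- Lower bound on the Arete density: if `λ ≤ Δ/ln 2`, `Δ > 0`, then for all
`t ≥ -Δ/2` and any `Δ_Γ > 0`,
`f_A(t + Δ) ≥ (1/4) · c_{Δ_Γ} · f_Γ(|t+Δ| + Δ_Γ)` where
`c_{Δ_Γ} = ∫_0^{Δ_Γ} f_Γ(x) dx`. -/
theorem arete_density_lower_bound (α θ lam Δ : ℝ)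
    (hα : 0 < α) (hα1 : α ≤ 1) (hθ : 0 < θ) (hlam : 0 < lam) (hΔ : 0 < Δ)
    (hlamΔ : lam ≤ Δ / Real.log 2) :
    let fΓ : ℝ → ℝ := fun x =>
      if 0 < x then Real.exp (-x / θ) * x ^ (α - 1) / (Real.Gamma α * θ ^ α) else 0
    let fGG : ℝ → ℝ := fun t => ∫ x in Ioi (0 : ℝ), fΓ (|t| + x) * fΓ x
    let fL : ℝ → ℝ := fun x => Real.exp (-|x| / lam) / (2 * lam)
    let fA : ℝ → ℝ := fun t => ∫ x : ℝ, fGG (t - x) * fL x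
    ∀ t : ℝ, -Δ / 2 ≤ t → ∀ ΔΓ : ℝ, 0 < ΔΓ →
      (1 / 4) * (∫ x in Ioc (0 : ℝ) ΔΓ, fΓ x) * fΓ (|t + Δ| + ΔΓ) ≤ fA (t + Δ) := by
  intro fΓ fGG fL fA t ht ΔΓ hΔΓ
  exact main_aux α θ lam Δ hα hα1 hθ hlam hΔ hlamΔ t (by linarith) hΔΓ
end

section
/- Let f : ℝ → ℝ_{>0} be a density that is symmetric around 0, monotonically decreasing in |t|, and satisfies f(t)/f(t+a) ≤ e^{ε} for all t ∈ ℝ and |a| ≤ Δ. Then the additive-noise mechanism M(x) = q(x) + Z, where Z has density f and q has sensitivity at most Δ, is ε-differentially private: for all neighboring inputs x, x' and all measurable S ⊆ ℝ, P[M(x) ∈ S] ≤ e^{ε} P[M(x') ∈ S]. -/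
open MeasureTheory

lemma map_withDensity_add_left (f : ℝ → ℝ) (hfmeas : Measurable f) (c : ℝ)
    (S : Set ℝ) (hS : MeasurableSet S) :
    (volume.withDensity (fun t => ENNReal.ofReal (f t))).map (fun z => c + z) S =
      ∫⁻ t in S, ENNReal.ofReal (f (t - c)) := by
  rw [Measure.map_apply (measurable_const_add c) hS,
    withDensity_apply _ ((measurable_const_add c) hS)]
  have hvol : Measure.map (fun z : ℝ => c + z) volume = volume :=
    (measurePreserving_add_left volume c).map_eq
  symm
  calc ∫⁻ t in S, ENNReal.ofReal (f (t - c))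
      = ∫⁻ t in S, ENNReal.ofReal (f (t - c))
          ∂(Measure.map (fun z : ℝ => c + z) volume) := by rw [hvol]
    _ = ∫⁻ z in (fun z : ℝ => c + z) ⁻¹' S, ENNReal.ofReal (f (c + z - c)) ∂volume :=
        setLIntegral_map hS ((ENNReal.measurable_ofReal.comp hfmeas).comp
          (measurable_id.sub measurable_const)) (measurable_const_add c)
    _ = ∫⁻ z in (fun z : ℝ => c + z) ⁻¹' S, ENNReal.ofReal (f z) ∂volume := by
        simp

/-- ε-differential privacy of the additive-noise mechanism: if the noise density
`f` is positive, symmetric around 0, monotonically decreasing in `|t|`, and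
satisfies `f(t)/f(t+a) ≤ e^ε` for all `t` and `|a| ≤ Δ`, and the query `q` has
sensitivity at most `Δ` over neighboring inputs, then the mechanism
`M(x) = q(x) + Z`, where `Z` has density `f` with respect to Lebesgue measure,
satisfies `P[M(x) ∈ S] ≤ e^ε · P[M(x') ∈ S]` for all neighboring `x, x'` and
all measurable `S`. -/
theorem arete_mechanism_dp {X : Type*} (Neighbor : X → X → Prop)
    (q : X → ℝ) (f : ℝ → ℝ) (ε Δ : ℝ) (hΔ : 0 < Δ) (hε : 0 < ε)
    (hfmeas : Measurable f)
    (hpos : ∀ t : ℝ, 0 < f t)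
    (hsym : ∀ t : ℝ, f t = f (-t))
    (hmono : ∀ t t' : ℝ, |t| ≤ |t'| → f t' ≤ f t)
    (hdensity : ∫ t : ℝ, f t = 1)
    (hratio : ∀ t a : ℝ, |a| ≤ Δ → f t / f (t + a) ≤ Real.exp ε)
    (hsens : ∀ x x' : X, Neighbor x x' → |q x - q x'| ≤ Δ) :
    ∀ x x' : X, Neighbor x x' → ∀ S : Set ℝ, MeasurableSet S →
      (volume.withDensity (fun t => ENNReal.ofReal (f t))).map (fun z => q x + z) S ≤
        ENNReal.ofReal (Real.exp ε) *
          (volume.withDensity (fun t => ENNReal.ofReal (f t))).map (fun z => q x' + z) S := by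
  intro x x' hn S hS
  rw [map_withDensity_add_left f hfmeas _ S hS, map_withDensity_add_left f hfmeas _ S hS,
    ← lintegral_const_mul (ENNReal.ofReal (Real.exp ε))
      (show Measurable fun t : ℝ => ENNReal.ofReal (f (t - q x')) from
        (ENNReal.measurable_ofReal.comp hfmeas).comp
          (measurable_id.sub measurable_const))]
  refine lintegral_mono fun t => ?_
  have key : f (t - q x) ≤ Real.exp ε * f (t - q x') := by
    have h := hratio (t - q x) (q x - q x') (hsens x x' hn)
    have : t - q x + (q x - q x') = t - q x' := by ring
    rw [this] at h
    calc f (t - q x) = f (t - q x) / f (t - q x') * f (t - q x') := by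
          field_simp
          rw [mul_div_assoc, div_self (hpos _).ne', mul_one]
      _ ≤ Real.exp ε * f (t - q x') := by
          exact mul_le_mul_of_nonneg_right h (hpos _).le
  calc ENNReal.ofReal (f (t - q x))
      ≤ ENNReal.ofReal (Real.exp ε * f (t - q x')) := ENNReal.ofReal_le_ofReal key
    _ = ENNReal.ofReal (Real.exp ε) * ENNReal.ofReal (f (t - q x')) :=
        ENNReal.ofReal_mul (Real.exp_pos ε).le
end
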